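/- Let θ be a similarity relation with finite range, ⊙ = min, F : U → [0,1] with F = θ̄(F). If {a} is a maximal E(F)-class (equivalently, F(a) > θ(a,y) for all y ≠ a), then for any h : U → [0,1] with θ̄(h)(a) ≥ F(a), one has θ̄(h)(a) = h(a). -/

import Mathlib

open unitInterval

instance : Fact ((0:ℝ) ≤ 1) := ⟨zero_le_one⟩

theorem stmt16 {U : Type*} (θ : U → U → unitInterval)
    (hrefl : ∀ x, θ x x = 1)
    (hsymm : ∀ x y, θ x y = θ y x)
    (htrans : ∀ x y z, θ x y ⊓ θ y z ≤ θ x z)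
    (hθfin : (Set.range fun p : U × U => θ p.1 p.2).Finite)
    (F : U → unitInterval)
    (hFfix : ∀ x, (⨆ y, θ x y ⊓ F y) = F x)
    (a : U)
    (hsing : ∀ y, y ≠ a → θ a y < F a) :
    ∀ h : U → unitInterval, F a ≤ (⨆ y, θ a y ⊓ h y) → (⨆ y, θ a y ⊓ h y) = h a := by
  intro h hle
  have hha : h a ≤ ⨆ y, θ a y ⊓ h y := by
    have := le_iSup (fun y => θ a y ⊓ h y) a
    rwa [hrefl, inf_eq_right.mpr le_one'] at this
  by_cases hU : ∀ y : U, y = a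
  · refine le_antisymm ?_ hha
    refine iSup_le fun y => ?_
    rw [hU y, hrefl]
    simpa using inf_le_right
  · push_neg at hU
    obtain ⟨y₀, hy₀⟩ := hU
    set T : Set unitInterval := {t | ∃ y, y ≠ a ∧ θ a y = t} with hT
    have hTfin : T.Finite := by
      apply hθfin.subset
      rintro t ⟨y, -, rfl⟩
      exact ⟨(a, y), rfl⟩
    have hTne : T.Nonempty := ⟨θ a y₀, y₀, hy₀, rfl⟩
    obtain ⟨c, hcT, hcmax⟩ : ∃ c ∈ T, ∀ t ∈ T, id c ≤ id t → id c = id t := by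
      obtain ⟨c, hcT, hc⟩ := Set.Finite.exists_maximalFor id T hTfin hTne
      exact ⟨c, hcT, fun t ht hle => le_antisymm hle (hc ht hle)⟩
    have hcmax' : ∀ t ∈ T, t ≤ c := by
      intro t ht
      by_contra hlt
      push_neg at hlt
      exact absurd (hcmax t ht hlt.le) hlt.ne
    have hcF : c < F a := by
      obtain ⟨y, hy, rfl⟩ := hcT
      exact hsing y hy
    have hsup : (⨆ y, θ a y ⊓ h y) ≤ h a ⊔ c := by
      refine iSup_le fun y => ?_
      by_cases hy : y = a
      · subst hy; rw [hrefl]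
        exact le_sup_of_le_left (by simpa using inf_le_right)
      · exact le_sup_of_le_right (le_trans inf_le_left (hcmax' _ ⟨y, hy, rfl⟩))
    have hFh : F a ≤ h a := by
      rcases le_sup_iff.mp (hle.trans hsup) with h1 | h2
      · exact h1
      · exact absurd h2 (not_le.mpr hcF)
    refine le_antisymm ?_ hha
    refine hsup.trans ?_
    exact sup_le le_rfl ((hcF.le.trans hFh))
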